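/- Let K be a number field, O_K its ring of integers, η a unit of O_K, and ω ∈ O_K such that ω² − 4η is squarefree and coprime to 2, and such that a root α of X² − ωX + η does not lie in K. Then α is a unit in the ring of integers of K(α), α⁻¹ = η⁻¹(ω − α), and O_{K(α)} = O_K[α] = O_K[α, α⁻¹]. -/

import Mathlib

open NumberField

open Polynomial in
/-- Let `η` be a unit of `𝓞 K` and `ω ∈ 𝓞 K` with `ω² − 4η` squarefree and coprime to `2`,
and let `α ∉ K` be a root of `X² − ωX + η`, with `L = K(α)`. Then `α` is a unit of the ring
of integers of `L`, `α⁻¹ = η⁻¹(ω − α)`, and `𝓞 L = 𝓞 K[α] = 𝓞 K[α, α⁻¹]`. -/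
theorem root_is_unit_and_generates {K L : Type*} [Field K] [NumberField K]
    [Field L] [NumberField L] [Algebra K L] [Algebra (𝓞 K) L] [IsScalarTower (𝓞 K) K L]
    (ω : 𝓞 K) (η : (𝓞 K)ˣ)
    (hsq : Squarefree (Ideal.span {ω ^ 2 - 4 * (η : 𝓞 K)} : Ideal (𝓞 K)))
    (hcop : (Ideal.span {ω ^ 2 - 4 * (η : 𝓞 K)} : Ideal (𝓞 K)) ⊔
      Ideal.span {(2 : 𝓞 K)} = ⊤)
    (α : L)
    (hroot : α ^ 2 - algebraMap (𝓞 K) L ω * α + algebraMap (𝓞 K) L (η : 𝓞 K) = 0)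
    (hgen : IntermediateField.adjoin K {α} = ⊤)
    (hnotK : α ∉ Set.range (algebraMap K L)) :
    ∃ hmem : α ∈ integralClosure (𝓞 K) L,
      IsUnit (⟨α, hmem⟩ : integralClosure (𝓞 K) L) ∧
      α⁻¹ = algebraMap (𝓞 K) L ((η⁻¹ : (𝓞 K)ˣ) : 𝓞 K) * (algebraMap (𝓞 K) L ω - α) ∧
      integralClosure (𝓞 K) L = Algebra.adjoin (𝓞 K) {α} ∧
      Algebra.adjoin (𝓞 K) ({α} : Set L) = Algebra.adjoin (𝓞 K) ({α, α⁻¹} : Set L) := by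
  set j := algebraMap (𝓞 K) L with hjdef
  set ι := algebraMap K L with hιdef
  set aK := algebraMap (𝓞 K) K with haKdef
  have hj : ∀ c : 𝓞 K, ι (aK c) = j c := fun c =>
    (IsScalarTower.algebraMap_apply (𝓞 K) K L c).symm
  set Δ : 𝓞 K := ω ^ 2 - 4 * (η : 𝓞 K) with hΔdef
  -- α is integral over 𝓞 K
  have hmem : α ∈ integralClosure (𝓞 K) L := by
    refine ⟨X ^ 2 - C ω * X + C (η : 𝓞 K), ?_, ?_⟩
    · have h : (X ^ 2 - C ω * X + C (η : 𝓞 K) : (𝓞 K)[X])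
          = X ^ 2 + (C (-ω) * X + C (η : 𝓞 K)) := by
        simp [sub_eq_add_neg]; ring
      rw [h]
      exact monic_X_pow_add (lt_of_le_of_lt (degree_linear_le) (by norm_num))
    · show eval₂ _ _ _ = 0
      rw [← aeval_def]
      simpa using hroot
  -- the inverse identity
  have h1 : α * (j ((η⁻¹ : (𝓞 K)ˣ) : 𝓞 K) * (j ω - α)) = 1 := by
    have hη : ((η⁻¹ : (𝓞 K)ˣ) : 𝓞 K) * ((η : (𝓞 K)ˣ) : 𝓞 K) = 1 := Units.inv_mul η
    have : α * (j ((η⁻¹ : (𝓞 K)ˣ) : 𝓞 K) * (j ω - α))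
        = j ((η⁻¹ : (𝓞 K)ˣ) : 𝓞 K) * (j ω * α - α ^ 2) := by ring
    rw [this, show j ω * α - α ^ 2 = j (η : 𝓞 K) by linear_combination -hroot,
      ← map_mul, hη, map_one]
  have hβmem : j ((η⁻¹ : (𝓞 K)ˣ) : 𝓞 K) * (j ω - α) ∈ integralClosure (𝓞 K) L :=
    mul_mem (Subalgebra.algebraMap_mem _ _) (sub_mem (Subalgebra.algebraMap_mem _ _) hmem)
  have hinv : α⁻¹ = j ((η⁻¹ : (𝓞 K)ˣ) : 𝓞 K) * (j ω - α) :=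
    inv_eq_of_mul_eq_one_right h1
  refine ⟨hmem, ?_, hinv, ?_, ?_⟩
  · exact IsUnit.of_mul_eq_one ⟨_, hβmem⟩ (Subtype.ext h1)
  · -- main part: integralClosure = adjoin {α}
    -- K-level minimal polynomial
    set pK : K[X] := X ^ 2 - C (aK ω) * X + C (aK (η : 𝓞 K)) with hpKdef
    have hmonicK : pK.Monic := by
      have h : pK = X ^ 2 + (C (-(aK ω)) * X + C (aK (η : 𝓞 K))) := by
        simp [hpKdef, sub_eq_add_neg]; ring
      rw [h]
      exact monic_X_pow_add (lt_of_le_of_lt (degree_linear_le) (by norm_num))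
    have hdegK : pK.natDegree = 2 := by
      unfold pK; compute_degree!
    have haev : aeval α pK = 0 := by
      have : aeval α pK = α ^ 2 - ι (aK ω) * α + ι (aK (η : 𝓞 K)) := by
        simp [hpKdef, hιdef]
      rw [this, hj, hj]
      exact hroot
    have hint : IsIntegral K α := ⟨pK, hmonicK, by rwa [← aeval_def]⟩
    have hmin : minpoly K α = pK := by
      have hdvd := minpoly.dvd K α haev
      have hle : (minpoly K α).natDegree ≤ 2 :=
        hdegK ▸ natDegree_le_of_dvd hdvd hmonicK.ne_zero
      have hpos := minpoly.natDegree_pos hint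
      have hne1 : (minpoly K α).natDegree ≠ 1 := by
        intro h
        have hd1 : (minpoly K α).degree = 1 := by
          rw [degree_eq_natDegree (minpoly.ne_zero hint), h]; rfl
        obtain ⟨c, hc⟩ := minpoly.degree_eq_one_iff.mp hd1
        exact hnotK ⟨c, hc⟩
      have hdeg2 : (minpoly K α).natDegree = 2 := by omega
      exact (eq_of_monic_of_dvd_of_natDegree_le (minpoly.monic hint) hmonicK hdvd
        (by omega)).symm
    -- power basis
    let e : (IntermediateField.adjoin K {α}) ≃ₐ[K] L :=
      (IntermediateField.equivOfEq hgen).trans IntermediateField.topEquiv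
    let B : PowerBasis K L := (IntermediateField.adjoin.powerBasis hint).map e
    have hBgen : B.gen = α := by
      simp [B, e, IntermediateField.adjoin.powerBasis_gen]
    haveI : Module.Finite K L := B.finite
    have hfinrank : Module.finrank K L = 2 := by
      rw [B.finrank]
      show (IntermediateField.adjoin.powerBasis hint).dim = 2
      rw [IntermediateField.adjoin.powerBasis_dim, hmin, hdegK]
    have htrα : Algebra.trace K L α = aK ω := by
      have h := B.trace_gen_eq_nextCoeff_minpoly
      rw [hBgen, hmin] at h
      have hnc : pK.nextCoeff = -(aK ω) := by
        rw [Polynomial.nextCoeff, hdegK]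
        simp [hpKdef, coeff_X]
      rw [h, hnc, neg_neg]
    -- Δ ≠ 0
    have hΔ0 : Δ ≠ 0 := by
      intro h
      apply hnotK
      have hh : j ω ^ 2 - 4 * j (η : 𝓞 K) = 0 := by
        have := congrArg j h
        simpa [hΔdef, map_sub, map_mul, map_pow, map_ofNat] using this
      have hsq0 : (2 * α - j ω) ^ 2 = 0 := by
        linear_combination 4 * hroot + hh
      have h2 : 2 * α - j ω = 0 := by
        exact (pow_eq_zero_iff (by norm_num : (2:ℕ) ≠ 0)).mp hsq0
      refine ⟨aK ω / 2, ?_⟩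
      rw [map_div₀, hj, map_ofNat]
      field_simp
      linear_combination -h2
    have hΔK0 : aK Δ ≠ 0 := fun h =>
      hΔ0 ((map_eq_zero_iff aK (IsFractionRing.injective (𝓞 K) K)).mp h)
    -- prove equality of subalgebras
    refine le_antisymm ?_ (Algebra.adjoin_le (Set.singleton_subset_iff.mpr hmem))
    intro z hz
    have hz : IsIntegral (𝓞 K) z := hz
    -- write z = x + y α
    have htop : Algebra.adjoin K {α} = ⊤ := by
      rw [← IntermediateField.adjoin_simple_toSubalgebra_of_isAlgebraic hint.isAlgebraic, hgen]
      rfl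
    have hz' : z ∈ Algebra.adjoin K {α} := htop ▸ Algebra.mem_top
    rw [Algebra.adjoin_singleton_eq_range_aeval] at hz'
    obtain ⟨p, hp⟩ := hz'
    set r := p %ₘ pK with hrdef
    have hrz : aeval α r = z := by
      have h := congrArg (aeval α) (modByMonic_add_div p pK)
      rw [map_add, map_mul, haev, zero_mul, add_zero] at h
      rw [h]; exact hp
    have hdegr : r.degree ≤ 1 := by
      have h := degree_modByMonic_lt p hmonicK
      have h2 : pK.degree = 2 := by
        rw [degree_eq_natDegree hmonicK.ne_zero, hdegK]; rfl
      rw [h2] at h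
      exact Order.lt_succ_iff.mp (by exact_mod_cast h)
    set x := r.coeff 0 with hxdef
    set y := r.coeff 1 with hydef
    have hzxy : z = ι x + ι y * α := by
      rw [← hrz]
      conv_lhs => rw [eq_X_add_C_of_degree_le_one hdegr]
      simp only [map_add, map_mul, aeval_C, aeval_X]
      ring
    -- trace of z
    have htr : Algebra.trace K L z = 2 * x + aK ω * y := by
      have h : z = ι x + y • α := by rw [hzxy, Algebra.smul_def]
      rw [h, map_add, LinearMap.map_smul, Algebra.trace_algebraMap, htrα, hfinrank]
      rw [smul_eq_mul, nsmul_eq_mul]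
      push_cast
      ring
    have hTint : IsIntegral (𝓞 K) (Algebra.trace K L z) := Algebra.isIntegral_trace hz
    obtain ⟨T', hT'⟩ := IsIntegrallyClosed.isIntegral_iff.mp hTint
    -- w := 2z - trace(z) = y (2α - ω), and w² = y² Δ
    have hw : 2 * z - j T' = ι y * (2 * α - j ω) := by
      rw [← hj T', hT', htr, hzxy]
      simp only [map_add, map_mul, map_ofNat, hj]
      ring
    have hjΔ : j Δ = (j ω) ^ 2 - 4 * j (η : 𝓞 K) := by
      simp [hΔdef, map_sub, map_mul, map_pow, map_ofNat]
    have hwsq : (ι y * (2 * α - j ω)) ^ 2 = ι (y ^ 2 * aK Δ) := by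
      rw [map_mul, map_pow, hj]
      linear_combination (4 * (ι y) ^ 2) * hroot - ((ι y) ^ 2) * hjΔ
    have hu_int : IsIntegral (𝓞 K) (y ^ 2 * aK Δ) := by
      rw [← isIntegral_algebraMap_iff (algebraMap K L).injective, ← hιdef, ← hwsq, ← hw]
      have : (2 : L) * z - j T' ∈ integralClosure (𝓞 K) L := by
        refine sub_mem (mul_mem ?_ hz) (Subalgebra.algebraMap_mem _ _)
        rw [show (2 : L) = j 2 by rw [map_ofNat]]
        exact Subalgebra.algebraMap_mem _ _
      exact IsIntegral.pow this 2
    obtain ⟨s, hs⟩ := IsIntegrallyClosed.isIntegral_iff.mp hu_int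
    -- t := Δ y is integral
    have ht_int : IsIntegral (𝓞 K) (aK Δ * y) := by
      refine ⟨X ^ 2 - C (Δ * s), monic_X_pow_sub_C _ two_ne_zero, ?_⟩
      show eval₂ _ _ _ = 0
      rw [← aeval_def]
      simp only [map_sub, map_pow, aeval_X, aeval_C, ← haKdef]
      rw [map_mul, hs]
      ring
    obtain ⟨t', ht'⟩ := IsIntegrallyClosed.isIntegral_iff.mp ht_int
    have ht'sq : t' ^ 2 = Δ * s := by
      apply IsFractionRing.injective (𝓞 K) K
      rw [map_pow, ht', map_mul, hs]
      ring
    -- ideal argument : Δ ∣ t'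
    have hdvdΔ : Δ ∣ t' := by
      have h2 : (Ideal.span {Δ} : Ideal (𝓞 K)) ∣ Ideal.span {t'} ^ 2 := by
        rw [Ideal.span_singleton_pow, Ideal.dvd_iff_le,
          Ideal.span_singleton_le_span_singleton]
        exact ⟨s, ht'sq⟩
      have h3 := (hsq.dvd_pow_iff_dvd two_ne_zero).mp h2
      rw [Ideal.dvd_iff_le, Ideal.span_singleton_le_span_singleton] at h3
      exact h3
    obtain ⟨y', hy'⟩ := hdvdΔ
    have hy_eq : y = aK y' := by
      have h : aK Δ * y = aK Δ * aK y' := by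
        rw [← map_mul, ← hy', ht']
      exact mul_left_cancel₀ hΔK0 h
    -- conclude
    have hyα_mem : j y' * α ∈ Algebra.adjoin (𝓞 K) ({α} : Set L) :=
      mul_mem (Subalgebra.algebraMap_mem _ _) (Algebra.subset_adjoin rfl)
    have hx_int : IsIntegral (𝓞 K) x := by
      rw [← isIntegral_algebraMap_iff (algebraMap K L).injective, ← hιdef]
      have h : ι x = z - ι y * α := by rw [hzxy]; ring
      rw [h]
      show z - ι y * α ∈ integralClosure (𝓞 K) L
      refine sub_mem hz ?_
      rw [hy_eq, hj]
      exact mul_mem (Subalgebra.algebraMap_mem (integralClosure (𝓞 K) L) y') hmem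
    obtain ⟨x', hx'⟩ := IsIntegrallyClosed.isIntegral_iff.mp hx_int
    rw [hzxy, ← hx', hy_eq, hj, hj]
    exact add_mem (Subalgebra.algebraMap_mem _ _) hyα_mem
  · -- adjoin {α} = adjoin {α, α⁻¹}
    refine le_antisymm (Algebra.adjoin_mono (Set.singleton_subset_iff.mpr (by simp)))
      (Algebra.adjoin_le ?_)
    rintro w hw
    rcases hw with rfl | hw
    · exact Algebra.subset_adjoin rfl
    · rcases hw with rfl
      rw [hinv]
      exact mul_mem (Subalgebra.algebraMap_mem _ _)
        (sub_mem (Subalgebra.algebraMap_mem _ _) (Algebra.subset_adjoin rfl))
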